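/- Let P be an n-dimensional polytope in ℝ^n, v a vertex of P, and v_1,...,v_n distinct vertices of P each connected to v by an edge. Then for any u ∈ conv(v, v_1,...,v_n) and any vertex w of P not in {v, v_1,...,v_n}, there exist distinct vertices w_1,...,w_m of P, each connected to w by an edge, such that u lies in the translated cone w + Cone(w_1 − w,...,w_m − w), this cone is simplicial, and u does not lie in conv(w, w_1,...,w_m) ∖ conv(w_1,...,w_m). -/

import Mathlib

open Finset

noncomputable section

/-- Cast an integer vector to a real vector. -/
def castZ {n : ℕ} (u : Fin n → ℤ) : Fin n → ℝ := fun j => (u j : ℝ)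

/-- Membership in the cone spanned by the vectors `w`. -/
def inCone {n m : ℕ} (w : Fin m → (Fin n → ℝ)) (x : Fin n → ℝ) : Prop :=
  ∃ a : Fin m → ℝ, (∀ i, 0 ≤ a i) ∧ x = ∑ i, a i • w i

/-- The set of total weights of nonnegative representations of `x` in terms of `w`. -/
def weightSet {n m : ℕ} (w : Fin m → (Fin n → ℝ)) (x : Fin n → ℝ) : Set ℝ :=
  { t | ∃ a : Fin m → ℝ, (∀ i, 0 ≤ a i) ∧ x = ∑ i, a i • w i ∧ t = ∑ i, a i }

/-- The maximum weight function `W`. -/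
def maxWeight {n m : ℕ} (w : Fin m → (Fin n → ℝ)) (x : Fin n → ℝ) : ℝ :=
  sSup (weightSet w x)

/-- A lattice vector is primitive. -/
def Primitive {n : ℕ} (v : Fin n → ℤ) : Prop :=
  v ≠ 0 ∧ ∀ (z : ℤ) (q : Fin n → ℤ), 0 < z → v = z • q → z = 1

/-- Lattice points of the cone. -/
def latticeInCone {n m : ℕ} (w : Fin m → (Fin n → ℤ)) (u : Fin n → ℤ) : Prop :=
  inCone (fun i => castZ (w i)) (castZ u)

/-- `χ^u ∈ m_Q^k` : `u` is a sum of `k` nonzero lattice points of the cone plus a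
lattice point of the cone. -/
def inPowM {n m : ℕ} (w : Fin m → (Fin n → ℤ)) (u : Fin n → ℤ) (k : ℕ) : Prop :=
  ∃ v : Fin k → (Fin n → ℤ), (∀ i, latticeInCone w (v i) ∧ v i ≠ 0) ∧
    latticeInCone w (u - ∑ i, v i)

/-- `k_u` : the largest `k` such that `χ^u ∈ m_Q^k`. -/
def kU {n m : ℕ} (w : Fin m → (Fin n → ℤ)) (u : Fin n → ℤ) : ℕ :=
  sSup {k | inPowM w u k}

/-- Lattice points of the fundamental box `S_Q`. -/
def inBox {n m : ℕ} (w : Fin m → (Fin n → ℤ)) (u : Fin n → ℤ) : Prop :=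
  ∃ a : Fin m → ℝ, (∀ i, 0 ≤ a i ∧ a i < 1) ∧ castZ u = ∑ i, a i • castZ (w i)

/-- The constant `Γ_Q`. -/
def gammaQ {n m : ℕ} (w : Fin m → (Fin n → ℤ)) : ℝ :=
  sSup { x | ∃ u, inBox w u ∧
    x = maxWeight (fun i => castZ (w i)) (castZ u) - (kU w u : ℝ) }

end

section AuxLemmas
variable {E : Type*} [NormedAddCommGroup E] [NormedSpace ℝ E] [FiniteDimensional ℝ E]

lemma mem_convexHull_finset' {V : Finset E} {y : E} (h : y ∈ convexHull ℝ (V : Set E)) :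
    ∃ lam : E → ℝ, (∀ x ∈ V, 0 ≤ lam x) ∧ ∑ x ∈ V, lam x = 1 ∧ ∑ x ∈ V, lam x • x = y := by
  rw [Finset.convexHull_eq] at h
  obtain ⟨lam, h0, h1, hc⟩ := h
  exact ⟨lam, h0, h1, by rwa [Finset.centerMass_eq_of_sum_1 _ _ h1] at hc⟩

lemma extremePoint_of_subset {P C : Set E} {x : E} (hC : C ⊆ P)
    (hx : x ∈ Set.extremePoints ℝ P) (hxC : x ∈ C) : x ∈ Set.extremePoints ℝ C := by
  rw [mem_extremePoints] at hx ⊢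
  exact ⟨hxC, fun y hy z hz hm => hx.2 y (hC hy) z (hC hz) hm⟩

variable {F : Type*} [AddCommGroup F] [Module ℝ F]
lemma cone_reduce {ι : Type*} [Fintype ι] (g : ι → F)
    (pointed : ∀ c : ι → ℝ, (∀ i, 0 ≤ c i) → ∑ i, c i • g i = 0 → ∀ i, c i = 0)
    (d : F) :
    ∀ (c : ι → ℝ), (∀ i, 0 ≤ c i) → d = ∑ i, c i • g i → 1 ≤ ∑ i, c i →
    ∃ (s : Finset ι) (c' : ι → ℝ), (∀ i, 0 ≤ c' i) ∧ (∀ i ∉ s, c' i = 0) ∧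
      d = ∑ i, c' i • g i ∧ 1 ≤ ∑ i, c' i ∧ LinearIndependent ℝ (fun i : s => g i) := by
  classical
  suffices H : ∀ k, ∀ (c : ι → ℝ), (Finset.univ.filter fun i => c i ≠ 0).card ≤ k →
      (∀ i, 0 ≤ c i) → d = ∑ i, c i • g i → 1 ≤ ∑ i, c i →
      ∃ (s : Finset ι) (c' : ι → ℝ), (∀ i, 0 ≤ c' i) ∧ (∀ i ∉ s, c' i = 0) ∧
        d = ∑ i, c' i • g i ∧ 1 ≤ ∑ i, c' i ∧ LinearIndependent ℝ (fun i : s => g i) by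
    intro c h0 hd h1
    exact H _ c le_rfl h0 hd h1
  intro k
  induction k with
  | zero =>
    intro c hcard h0 hd h1
    have hall : ∀ i, c i = 0 := by
      intro i
      by_contra hne
      have : i ∈ Finset.univ.filter fun i => c i ≠ 0 := by simp [hne]
      have := Finset.card_pos.2 ⟨i, this⟩
      omega
    have : (1:ℝ) ≤ 0 := by
      simpa [hall] using h1
    linarith
  | succ k ih =>
    intro c hcard h0 hd h1
    set s : Finset ι := Finset.univ.filter fun i => c i ≠ 0 with hs
    by_cases hli : LinearIndependent ℝ (fun i : s => g i)
    · refine ⟨s, c, h0, ?_, hd, h1, hli⟩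
      intro i hi
      by_contra hne
      exact hi (by simp [hs, hne])
    · obtain ⟨μ₀, hμ₀sum, i₀, hi₀⟩ := Fintype.not_linearIndependent_iff.1 hli
      -- extend μ₀ to ι, with the right sign
      set μ₁ : ι → ℝ := fun i => if h : i ∈ s then μ₀ ⟨i, h⟩ else 0 with hμ₁
      have hμ₁sum : ∑ i, μ₁ i • g i = 0 := by
        rw [← Finset.sum_subset (Finset.subset_univ s)
          (by intro i _ hi; simp [hμ₁, dif_neg hi])]
        rw [← Finset.sum_coe_sort s (fun i => μ₁ i • g i)]
        calc ∑ i : s, μ₁ i • g i = ∑ i : s, μ₀ i • g i := by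
              apply Finset.sum_congr rfl
              intro i _
              simp [hμ₁, dif_pos i.2]
          _ = 0 := hμ₀sum
      set ν : ι → ℝ := if 0 < ∑ i, μ₁ i then -μ₁ else μ₁ with hν
      have hνsum0 : ∑ i, ν i • g i = 0 := by
        by_cases h : 0 < ∑ i, μ₁ i <;>
          simp [hν, h, neg_smul, Finset.sum_neg_distrib, hμ₁sum]
      have hνle : ∑ i, ν i ≤ 0 := by
        by_cases h : 0 < ∑ i, μ₁ i
        · simp only [hν, if_pos h, Pi.neg_apply, Finset.sum_neg_distrib]
          linarith
        · simpa [hν, if_neg h] using le_of_not_gt h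
      have hνsupp : ∀ i, i ∉ s → ν i = 0 := by
        intro i hi
        by_cases h : 0 < ∑ i, μ₁ i
        · rw [hν, if_pos h]; simp [hμ₁, dif_neg hi]
        · rw [hν, if_neg h]; simp [hμ₁, dif_neg hi]
      have hνne : ν (i₀ : ι) ≠ 0 := by
        have : μ₁ (i₀ : ι) = μ₀ i₀ := by simp [hμ₁, dif_pos i₀.2]
        by_cases h : 0 < ∑ i, μ₁ i <;> simp [hν, h, this, hi₀]
      have hpos : ∃ j ∈ s, 0 < ν j := by
        by_contra hnone
        push_neg at hnone
        have hν0 : ∀ i, 0 ≤ (-ν) i := by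
          intro i
          by_cases hi : i ∈ s
          · simpa using hnone i hi
          · simp [hνsupp i hi]
        have : ∀ i, (-ν) i = 0 := pointed (-ν) hν0 (by
          simpa [neg_smul, Finset.sum_neg_distrib] using congrArg Neg.neg hνsum0)
        exact hνne (by simpa using this i₀)
      obtain ⟨j₀, hj₀⟩ := hpos
      obtain ⟨jm, hjm, hjmin⟩ := (s.filter fun j => 0 < ν j).exists_min_image
        (fun j => c j / ν j) ⟨j₀, by simp [hj₀]⟩
      rw [Finset.mem_filter] at hjm
      set t : ℝ := c jm / ν jm with ht
      have htnn : 0 ≤ t := div_nonneg (h0 jm) (le_of_lt hjm.2)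
      set c' : ι → ℝ := fun i => c i - t * ν i with hc'
      have hc'0 : ∀ i, 0 ≤ c' i := by
        intro i
        rcases le_or_gt (ν i) 0 with hνi | hνi
        · have : t * ν i ≤ 0 := mul_nonpos_of_nonneg_of_nonpos htnn hνi
          simp only [hc']; linarith [h0 i]
        · have his : i ∈ s := by
            by_contra his
            rw [hνsupp i his] at hνi; exact lt_irrefl _ hνi
          have := hjmin i (Finset.mem_filter.2 ⟨his, hνi⟩)
          have : t * ν i ≤ c i := by
            rw [ht]
            calc c jm / ν jm * ν i ≤ c i / ν i * ν i := by
                  apply mul_le_mul_of_nonneg_right this (le_of_lt hνi)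
              _ = c i := div_mul_cancel₀ _ (ne_of_gt hνi)
          simp only [hc']; linarith
      have hc'd : d = ∑ i, c' i • g i := by
        simp only [hc', sub_smul, mul_smul, Finset.sum_sub_distrib]
        rw [← Finset.smul_sum, hνsum0, smul_zero, sub_zero, hd]
      have hc'1 : 1 ≤ ∑ i, c' i := by
        simp only [hc', Finset.sum_sub_distrib, ← Finset.mul_sum]
        nlinarith [mul_nonpos_of_nonneg_of_nonpos htnn hνle]
      have hcjm : c' jm = 0 := by
        simp only [hc', ht]
        rw [div_mul_eq_mul_div, mul_div_assoc, div_self (ne_of_gt hjm.2), mul_one, sub_self]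
      have hsubset : (Finset.univ.filter fun i => c' i ≠ 0) ⊆ s.erase jm := by
        intro i hi
        rw [Finset.mem_filter] at hi
        rw [Finset.mem_erase]
        constructor
        · rintro rfl; exact hi.2 hcjm
        · by_contra his
          exact hi.2 (by simp [hc', h0, hνsupp i his, (by simpa [hs] using his : c i = 0)])
      have hcard' : (Finset.univ.filter fun i => c' i ≠ 0).card ≤ k := by
        have h1 := Finset.card_le_card hsubset
        have h2 : (s.erase jm).card = s.card - 1 := Finset.card_erase_of_mem hjm.1
        have h3 : 0 < s.card := Finset.card_pos.2 ⟨jm, hjm.1⟩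
        omega
      exact ih c' hcard' hc'0 hc'd hc'1

lemma vertex_cone {E : Type} [NormedAddCommGroup E] [NormedSpace ℝ E]
    [FiniteDimensional ℝ E] (V : Finset E) (w : E)
    (hw : w ∈ Set.extremePoints ℝ (convexHull ℝ (V : Set E))) :
    ∃ (κ : Type) (_ : Fintype κ) (xg : κ → E),
      (∀ e, w ≠ xg e ∧ xg e ∈ Set.extremePoints ℝ (convexHull ℝ (V : Set E)) ∧
        IsExtreme ℝ (convexHull ℝ (V : Set E)) (segment ℝ w (xg e))) ∧
      (∀ c : κ → ℝ, (∀ e, 0 ≤ c e) → ∑ e, c e • (xg e - w) = 0 → ∀ e, c e = 0) ∧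
      (∀ y ∈ convexHull ℝ (V : Set E), ∃ c : κ → ℝ, (∀ e, 0 ≤ c e) ∧
        y - w = ∑ e, c e • (xg e - w)) := by
  classical
  set P := convexHull ℝ (V : Set E) with hPdef
  have hPconv : Convex ℝ P := convex_convexHull ℝ _
  have hwP : w ∈ P := hw.1
  have hwV : w ∈ V := extremePoints_convexHull_subset hw
  have hPcl : IsClosed P := V.finite_toSet.isClosed_convexHull ℝ
  have hPcp : IsCompact P := V.finite_toSet.isCompact_convexHull ℝ
  set V' := V.erase w with hV'
  -- representation of points of P in terms of displacements from w
  have repA : ∀ y ∈ P, ∃ lam : E → ℝ, (∀ x ∈ V', 0 ≤ lam x) ∧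
      y - w = ∑ x ∈ V', lam x • (x - w) := by
    intro y hy
    obtain ⟨lam, h0, h1, hsum⟩ := mem_convexHull_finset' hy
    refine ⟨lam, fun x hx => h0 x (Finset.mem_of_mem_erase hx), ?_⟩
    have hV : ∑ x ∈ V, lam x • (x - w) = y - w := by
      simp only [smul_sub, Finset.sum_sub_distrib, hsum, ← Finset.sum_smul, h1, one_smul]
    rw [← hV, ← Finset.sum_erase_add V _ hwV]
    simp [hV']
  -- separating functional
  have hwnot : w ∉ convexHull ℝ (V' : Set E) := by
    intro hmem
    have hsub : convexHull ℝ (V' : Set E) ⊆ P :=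
      convexHull_mono (by exact_mod_cast Finset.coe_subset.2 (Finset.erase_subset _ _))
    have h1 : w ∈ Set.extremePoints ℝ (convexHull ℝ (V' : Set E)) :=
      extremePoint_of_subset hsub hw hmem
    have h2 := extremePoints_convexHull_subset h1
    simp [hV'] at h2
  obtain ⟨f, cthr, hflt, hfw⟩ := geometric_hahn_banach_closed_point
    (convex_convexHull ℝ _) (V'.finite_toSet.isClosed_convexHull ℝ) hwnot
  set δ : ℝ := f w - cthr with hδdef
  have hδ : 0 < δ := by simp only [hδdef]; linarith
  set L : E →ₗ[ℝ] ℝ := δ⁻¹ • (-(f : E →ₗ[ℝ] ℝ)) with hLdef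
  have hLval : ∀ d : E, L d = (- f d) / δ := by
    intro d
    simp [hLdef, div_eq_inv_mul]
  have hLkey : ∀ x ∈ V', 1 ≤ L (x - w) := by
    intro x hx
    have hxlt : f x < cthr := hflt x (subset_convexHull ℝ _ (by exact_mod_cast hx))
    rw [hLval, map_sub]
    rw [le_div_iff₀ hδ]
    linarith
  have hL0 : ∀ y ∈ P, 0 ≤ L (y - w) := by
    intro y hy
    obtain ⟨lam, hlam0, hrep⟩ := repA y hy
    rw [hrep, map_sum]
    apply Finset.sum_nonneg
    intro x hx
    rw [map_smul, smul_eq_mul]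
    exact mul_nonneg (hlam0 x hx) (le_trans zero_le_one (hLkey x hx))
  have hface : ∀ y ∈ P, L (y - w) = 0 → y = w := by
    intro y hy hLy
    obtain ⟨lam, hlam0, hrep⟩ := repA y hy
    rw [hrep, map_sum] at hLy
    have hterm : ∀ x ∈ V', lam x * L (x - w) = 0 := by
      rw [Finset.sum_eq_zero_iff_of_nonneg] at hLy
      · intro x hx; simpa using hLy x hx
      · intro x hx
        rw [map_smul, smul_eq_mul]
        exact mul_nonneg (hlam0 x hx) (le_trans zero_le_one (hLkey x hx))
    have hlamz : ∀ x ∈ V', lam x = 0 := by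
      intro x hx
      have h1 := hterm x hx
      have h2 := hLkey x hx
      rcases mul_eq_zero.1 h1 with h | h
      · exact h
      · linarith
    have : y - w = 0 := by
      rw [hrep]
      exact Finset.sum_eq_zero fun x hx => by rw [hlamz x hx, zero_smul]
    exact sub_eq_zero.1 this
  -- the slice ("vertex figure")
  set A : Finset E := V'.image (fun x => w + (L (x - w))⁻¹ • (x - w)) with hAdef
  have hA1 : ∀ a ∈ A, L (a - w) = 1 ∧ a ∈ P := by
    intro a ha
    rw [hAdef, Finset.mem_image] at ha
    obtain ⟨x, hx, rfl⟩ := ha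
    have hLx := hLkey x hx
    have hLxne : L (x - w) ≠ 0 := by linarith
    constructor
    · rw [add_sub_cancel_left, map_smul, smul_eq_mul, inv_mul_cancel₀ hLxne]
    · have hxP : x ∈ P := subset_convexHull ℝ _ (by exact_mod_cast Finset.mem_of_mem_erase hx)
      have hr0 : 0 ≤ (L (x - w))⁻¹ := inv_nonneg.2 (by linarith)
      have hr1 : (L (x - w))⁻¹ ≤ 1 := by
        rw [inv_le_one_iff₀]; right; exact hLx
      have := hPconv hwP hxP (by linarith : (0:ℝ) ≤ 1 - (L (x - w))⁻¹) hr0 (by ring)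
      convert this using 1
      rw [smul_sub]
      module
  set Q := convexHull ℝ (A : Set E) with hQdef
  have hQP : Q ⊆ P := convexHull_min (fun a ha => (hA1 a ha).2) hPconv
  have hQL : ∀ q ∈ Q, L (q - w) = 1 := by
    have hconv : Convex ℝ {y : E | L (y - w) = 1} := by
      intro y hy z hz a b ha hb hab
      simp only [Set.mem_setOf_eq] at hy hz ⊢
      have : a • y + b • z - w = a • (y - w) + b • (z - w) := by
        calc a • y + b • z - w = a • (y - w) + b • (z - w) + ((a + b) - 1) • w := by module
          _ = a • (y - w) + b • (z - w) := by rw [hab]; simp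
      rw [this, map_add, map_smul, map_smul, smul_eq_mul, smul_eq_mul, hy, hz,
        mul_one, mul_one, hab]
    intro q hq
    exact convexHull_min (fun a ha => (hA1 a ha).1) hconv hq
  -- slice representation
  have repB : ∀ y ∈ P, 0 < L (y - w) → w + (L (y - w))⁻¹ • (y - w) ∈ Q := by
    intro y hy hLy
    obtain ⟨lam, hlam0, hrep⟩ := repA y hy
    have hLsum : ∑ x ∈ V', lam x * L (x - w) = L (y - w) := by
      rw [hrep, map_sum]
      exact Finset.sum_congr rfl fun x hx => by rw [map_smul, smul_eq_mul]
    apply mem_convexHull_of_exists_fintype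
      (fun x : {x // x ∈ V'} => lam x * L ((x : E) - w) / L (y - w))
      (fun x : {x // x ∈ V'} => w + (L ((x : E) - w))⁻¹ • ((x : E) - w))
    · intro x
      exact div_nonneg (mul_nonneg (hlam0 x x.2)
        (le_trans zero_le_one (hLkey x x.2))) (le_of_lt hLy)
    · rw [← Finset.sum_div, Finset.sum_coe_sort V' (fun x => lam x * L (x - w)), hLsum,
        div_self (ne_of_gt hLy)]
    · intro x
      exact Finset.mem_coe.2 (Finset.mem_image_of_mem _ x.2)
    · have key : ∀ x : {x // x ∈ V'},
          (lam x * L ((x : E) - w) / L (y - w)) • (w + (L ((x : E) - w))⁻¹ • ((x : E) - w))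
          = (lam x * L ((x : E) - w) / L (y - w)) • w + (lam x / L (y - w)) • ((x : E) - w) := by
        intro x
        have hLxne : L ((x : E) - w) ≠ 0 := by linarith [hLkey x x.2]
        have hsc : lam x * L ((x : E) - w) / L (y - w) * (L ((x : E) - w))⁻¹
            = lam x / L (y - w) := by
          rw [div_mul_eq_mul_div, mul_assoc, mul_inv_cancel₀ hLxne, mul_one]
        rw [smul_add, smul_smul, hsc]
      rw [Finset.sum_congr rfl (fun x _ => key x), Finset.sum_add_distrib, ← Finset.sum_smul,
        ← Finset.sum_div, Finset.sum_coe_sort V' (fun x => lam x * L (x - w)), hLsum,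
        div_self (ne_of_gt hLy), one_smul]
      congr 1
      have : ∑ x : {x // x ∈ V'}, (lam x / L (y - w)) • ((x : E) - w)
          = (L (y - w))⁻¹ • ∑ x ∈ V', lam x • (x - w) := by
        rw [Finset.smul_sum,
          ← Finset.sum_coe_sort V' (fun x => (L (y - w))⁻¹ • (lam x • (x - w)))]
        exact Finset.sum_congr rfl fun x _ => by
          rw [smul_smul, div_eq_inv_mul]
      rw [this, ← hrep]
  -- Krein–Milman for the slice
  have hQcp : IsCompact Q := A.finite_toSet.isCompact_convexHull ℝ
  have hQconv : Convex ℝ Q := convex_convexHull ℝ _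
  set EQ := Q.extremePoints ℝ with hEQdef
  have hEQA : EQ ⊆ (A : Set E) := extremePoints_convexHull_subset
  have hEQfin : EQ.Finite := A.finite_toSet.subset hEQA
  have hQE : convexHull ℝ EQ = Q := by
    have h1 := closure_convexHull_extremePoints hQcp hQconv
    rwa [(hEQfin.isClosed_convexHull ℝ).closure_eq] at h1
  obtain ⟨M, hM⟩ : ∃ M : ℝ, ∀ p ∈ P, L (p - w) ≤ M := by
    have hcont : Continuous fun p : E => L (p - w) :=
      L.continuous_of_finiteDimensional.comp (continuous_id.sub continuous_const)
    obtain ⟨p₀, _, hp₀⟩ := hPcp.exists_isMaxOn ⟨w, hwP⟩ hcont.continuousOn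
    exact ⟨L (p₀ - w), hp₀⟩
  have key : ∀ e ∈ EQ, ∃ (te : ℝ) (xe : E), 1 ≤ te ∧ xe - w = te • (e - w) ∧
      (∀ q ∈ P, ∀ s : ℝ, q - w = s • (e - w) → q ∈ segment ℝ w xe) ∧
      IsExtreme ℝ P (segment ℝ w xe) ∧ xe ∈ Set.extremePoints ℝ P := by
    intro e heE
    have heQ : e ∈ Q := extremePoints_subset heE
    have heP : e ∈ P := hQP heQ
    have hLe : L (e - w) = 1 := hQL e heQ
    set T : Set ℝ := {t : ℝ | 0 ≤ t ∧ w + t • (e - w) ∈ P} with hTdef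
    have h1T : (1:ℝ) ∈ T := ⟨zero_le_one, by simpa using heP⟩
    have hTsub : T ⊆ Set.Icc 0 M := by
      rintro t ⟨ht0, htP⟩
      refine ⟨ht0, ?_⟩
      have := hM _ htP
      rwa [add_sub_cancel_left, map_smul, smul_eq_mul, hLe, mul_one] at this
    have hTcl : IsClosed T := by
      have hTeq : T = Set.Ici (0:ℝ) ∩ (fun t : ℝ => w + t • (e - w)) ⁻¹' P := by
        ext t
        constructor
        · rintro ⟨h1, h2⟩; exact ⟨h1, h2⟩
        · rintro ⟨h1, h2⟩; exact ⟨h1, h2⟩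
      rw [hTeq]
      exact isClosed_Ici.inter (hPcl.preimage (continuous_const.add (continuous_id.smul continuous_const)))
    have hTcp : IsCompact T := IsCompact.of_isClosed_subset isCompact_Icc hTcl hTsub
    set te := sSup T with htedef
    have hteT : te ∈ T := hTcp.sSup_mem ⟨1, h1T⟩
    have hbdd : BddAbove T := hTcp.bddAbove
    have hte1 : 1 ≤ te := le_csSup hbdd h1T
    have hte0 : 0 < te := lt_of_lt_of_le one_pos hte1
    set xe := w + te • (e - w) with hxedef
    have hxeP : xe ∈ P := hteT.2
    have hxews : xe - w = te • (e - w) := by rw [hxedef, add_sub_cancel_left]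
    have hstar : ∀ q ∈ P, ∀ s : ℝ, q - w = s • (e - w) → q ∈ segment ℝ w xe := by
      intro q hq s hs
      have hs0 : 0 ≤ s := by
        have := hL0 q hq
        rwa [hs, map_smul, smul_eq_mul, hLe, mul_one] at this
      have hsT : s ∈ T := ⟨hs0, by rw [← hs]; simpa using hq⟩
      have hsle : s ≤ te := le_csSup hbdd hsT
      rw [segment_eq_image' ℝ w xe]
      refine ⟨s / te, ⟨div_nonneg hs0 (le_of_lt hte0), div_le_one_of_le₀ hsle (le_of_lt hte0)⟩, ?_⟩
      show w + (s / te) • (xe - w) = q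
      rw [hxews, smul_smul, div_mul_cancel₀ _ (ne_of_gt hte0), ← hs]
      simp
    have hseg : IsExtreme ℝ P (segment ℝ w xe) := by
      constructor
      · exact hPconv.segment_subset hwP hxeP
      · intro y hy z hz p hp hop
        rw [segment_eq_image' ℝ w xe] at hp
        obtain ⟨θ, ⟨hθ0, hθ1⟩, hθp⟩ := hp
        set τ := θ * te with hτdef
        have hτ0 : 0 ≤ τ := mul_nonneg hθ0 (le_of_lt hte0)
        have hpw : p - w = τ • (e - w) := by
          rw [← hθp, add_sub_cancel_left, hxews, smul_smul]
        obtain ⟨α, β, hα, hβ, hαβ, hpyz⟩ := hop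
        have hopen : p ∈ openSegment ℝ y z := ⟨α, β, hα, hβ, hαβ, hpyz⟩
        have hcomb : α • (y - w) + β • (z - w) = p - w := by
          rw [← hpyz]
          calc α • (y - w) + β • (z - w) = α • y + β • z - (α + β) • w := by module
            _ = α • y + β • z - w := by rw [hαβ, one_smul]
        have hLyz : α * L (y - w) + β * L (z - w) = τ := by
          have h := congrArg L hcomb
          rwa [map_add, map_smul, map_smul, smul_eq_mul, smul_eq_mul, hpw, map_smul,
            smul_eq_mul, hLe, mul_one] at h
        rcases eq_or_lt_of_le hτ0 with hτz | hτpos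
        · have hpw' : p = w := by
            have h0 : p - w = 0 := by rw [hpw, ← hτz, zero_smul]
            exact sub_eq_zero.1 h0
          have hyz := (mem_extremePoints.1 hw).2 y hy z hz (by rw [← hpw']; exact hopen)
          rw [hyz.1]; exact left_mem_segment ℝ w xe
        · by_cases hy0 : L (y - w) = 0
          · have hyw : y = w := hface y hy hy0
            have hzw : z - w = (τ / β) • (e - w) := by
              have hβz : β • (z - w) = τ • (e - w) := by
                rw [← hpw, ← hcomb, hyw]
                simp
              calc z - w = β⁻¹ • (β • (z - w)) := by
                    rw [smul_smul, inv_mul_cancel₀ (ne_of_gt hβ), one_smul]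
                _ = β⁻¹ • (τ • (e - w)) := by rw [hβz]
                _ = (τ / β) • (e - w) := by rw [smul_smul, ← div_eq_inv_mul]
            rw [hyw]; exact left_mem_segment ℝ w xe
          · by_cases hz0 : L (z - w) = 0
            · have hzw : z = w := hface z hz hz0
              have hyw : y - w = (τ / α) • (e - w) := by
                have hαy : α • (y - w) = τ • (e - w) := by
                  rw [← hpw, ← hcomb, hzw]
                  simp
                calc y - w = α⁻¹ • (α • (y - w)) := by
                      rw [smul_smul, inv_mul_cancel₀ (ne_of_gt hα), one_smul]
                  _ = α⁻¹ • (τ • (e - w)) := by rw [hαy]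
                  _ = (τ / α) • (e - w) := by rw [smul_smul, ← div_eq_inv_mul]
              exact hstar y hy _ hyw
            · have hLy : 0 < L (y - w) := lt_of_le_of_ne (hL0 y hy) (Ne.symm hy0)
              have hLz : 0 < L (z - w) := lt_of_le_of_ne (hL0 z hz) (Ne.symm hz0)
              have hyQ := repB y hy hLy
              have hzQ := repB z hz hLz
              have hsum1 : α * L (y - w) / τ + β * L (z - w) / τ = 1 := by
                rw [← add_div, hLyz, div_self (ne_of_gt hτpos)]
              have hesplit : e ∈ openSegment ℝ (w + (L (y - w))⁻¹ • (y - w))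
                  (w + (L (z - w))⁻¹ • (z - w)) := by
                refine ⟨α * L (y - w) / τ, β * L (z - w) / τ,
                  div_pos (mul_pos hα hLy) hτpos, div_pos (mul_pos hβ hLz) hτpos, hsum1, ?_⟩
                have h1 : (α * L (y - w) / τ) • (w + (L (y - w))⁻¹ • (y - w))
                    = (α * L (y - w) / τ) • w + (α / τ) • (y - w) := by
                  rw [smul_add, smul_smul, div_mul_eq_mul_div, mul_assoc,
                    mul_inv_cancel₀ hy0, mul_one]
                have h2 : (β * L (z - w) / τ) • (w + (L (z - w))⁻¹ • (z - w))
                    = (β * L (z - w) / τ) • w + (β / τ) • (z - w) := by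
                  rw [smul_add, smul_smul, div_mul_eq_mul_div, mul_assoc,
                    mul_inv_cancel₀ hz0, mul_one]
                rw [h1, h2]
                have h3 : (α / τ) • (y - w) + (β / τ) • (z - w)
                    = τ⁻¹ • (α • (y - w) + β • (z - w)) := by
                  rw [smul_add, smul_smul, smul_smul, ← div_eq_inv_mul, ← div_eq_inv_mul]
                calc (α * L (y - w) / τ) • w + (α / τ) • (y - w)
                      + ((β * L (z - w) / τ) • w + (β / τ) • (z - w))
                    = (α * L (y - w) / τ + β * L (z - w) / τ) • w
                      + ((α / τ) • (y - w) + (β / τ) • (z - w)) := by module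
                  _ = w + τ⁻¹ • (τ • (e - w)) := by rw [hsum1, one_smul, h3, hcomb, hpw]
                  _ = e := by
                      rw [smul_smul, inv_mul_cancel₀ (ne_of_gt hτpos), one_smul,
                        add_sub_cancel]
              have hye := (mem_extremePoints.1 heE).2 _ hyQ _ hzQ hesplit
              have hyd : y - w = (L (y - w)) • (e - w) := by
                have h2 : (L (y - w))⁻¹ • (y - w) = e - w := by
                  have := congrArg (fun q => q - w) hye.1
                  simpa using this
                calc y - w = (L (y - w)) • ((L (y - w))⁻¹ • (y - w)) := by
                      rw [smul_smul, mul_inv_cancel₀ (ne_of_gt hLy), one_smul]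
                  _ = (L (y - w)) • (e - w) := by rw [h2]
              have hzd : z - w = (L (z - w)) • (e - w) := by
                have h2 : (L (z - w))⁻¹ • (z - w) = e - w := by
                  have := congrArg (fun q => q - w) hye.2
                  simpa using this
                calc z - w = (L (z - w)) • ((L (z - w))⁻¹ • (z - w)) := by
                      rw [smul_smul, mul_inv_cancel₀ (ne_of_gt hLz), one_smul]
                  _ = (L (z - w)) • (e - w) := by rw [h2]
              exact hstar y hy _ hyd
    have hep : xe ∈ Set.extremePoints ℝ P := by
      refine ⟨hxeP, ?_⟩
      intro y hy z hz hop
      have hxseg : xe ∈ segment ℝ w xe := right_mem_segment ℝ w xe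
      obtain ⟨hyseg, hzseg⟩ := And.intro (hseg.2 hy hz hxseg hop) (hseg.right_mem_of_mem_openSegment hy hz hxseg hop)
      rw [segment_eq_image' ℝ w xe] at hyseg hzseg
      obtain ⟨θy, ⟨hθy0, hθy1⟩, hy'⟩ := hyseg
      obtain ⟨θz, ⟨hθz0, hθz1⟩, hz'⟩ := hzseg
      obtain ⟨α, β, hα, hβ, hαβ, hsum⟩ := hop
      have hyw : y - w = (θy * te) • (e - w) := by
        rw [← hy', add_sub_cancel_left, hxews, smul_smul]
      have hzw : z - w = (θz * te) • (e - w) := by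
        rw [← hz', add_sub_cancel_left, hxews, smul_smul]
      have hcomb : α • (y - w) + β • (z - w) = xe - w := by
        rw [← hsum]
        calc α • (y - w) + β • (z - w) = α • y + β • z - (α + β) • w := by module
          _ = α • y + β • z - w := by rw [hαβ, one_smul]
      have hkey : α * (θy * te) + β * (θz * te) = te := by
        have h := congrArg L hcomb
        rwa [map_add, map_smul, map_smul, smul_eq_mul, smul_eq_mul, hyw, hzw, hxews,
          map_smul, map_smul, map_smul, smul_eq_mul, smul_eq_mul, smul_eq_mul, hLe,
          mul_one, mul_one, mul_one] at h
      have e3 : α * te * (1 - θy) + β * te * (1 - θz) = 0 := by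
        linear_combination te * hαβ - hkey
      have e1 : 0 ≤ α * te * (1 - θy) :=
        mul_nonneg (mul_nonneg (le_of_lt hα) (le_of_lt hte0)) (by linarith)
      have e2 : 0 ≤ β * te * (1 - θz) :=
        mul_nonneg (mul_nonneg (le_of_lt hβ) (le_of_lt hte0)) (by linarith)
      have hθy' : θy = 1 := by
        have h4 : α * te * (1 - θy) = 0 := by linarith
        rcases mul_eq_zero.1 h4 with h | h
        · exact absurd h (ne_of_gt (mul_pos hα hte0))
        · linarith
      have hθz' : θz = 1 := by
        have h4 : β * te * (1 - θz) = 0 := by linarith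
        rcases mul_eq_zero.1 h4 with h | h
        · exact absurd h (ne_of_gt (mul_pos hβ hte0))
        · linarith
      rw [← hy', hθy']; simp
    exact ⟨te, xe, hte1, hxews, hstar, hseg, hep⟩
  -- choose the edge endpoints
  set κ : Type _ := {a : E // a ∈ hEQfin.toFinset} with hκdef
  have key' : ∀ e : κ, ∃ (te : ℝ) (xe : E), 1 ≤ te ∧ xe - w = te • ((e : E) - w) ∧
      (∀ q ∈ P, ∀ s : ℝ, q - w = s • ((e : E) - w) → q ∈ segment ℝ w xe) ∧
      IsExtreme ℝ P (segment ℝ w xe) ∧ xe ∈ Set.extremePoints ℝ P :=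
    fun e => key (e : E) (hEQfin.mem_toFinset.1 e.2)
  choose t xg ht1 hxw hstar' hseg' hep' using key'
  have hmemEQ : ∀ e : κ, (e : E) ∈ EQ := fun e => hEQfin.mem_toFinset.1 e.2
  have hLg : ∀ e : κ, L (xg e - w) = t e := by
    intro e
    rw [hxw e, map_smul, smul_eq_mul, hQL _ (extremePoints_subset (hmemEQ e)), mul_one]
  have htpos : ∀ e : κ, (0:ℝ) < t e := fun e => lt_of_lt_of_le one_pos (ht1 e)
  have pointed : ∀ c : κ → ℝ, (∀ e, 0 ≤ c e) → ∑ e, c e • (xg e - w) = 0 → ∀ e, c e = 0 := by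
    intro c hc hsum e
    have hL : ∑ e, c e * t e = 0 := by
      have h := congrArg L hsum
      rw [map_sum, map_zero] at h
      rw [← h]
      exact Finset.sum_congr rfl fun e _ => by rw [map_smul, smul_eq_mul, hLg]
    have hnn : ∀ e ∈ Finset.univ (α := κ), 0 ≤ c e * t e :=
      fun e _ => mul_nonneg (hc e) (le_of_lt (htpos e))
    have := (Finset.sum_eq_zero_iff_of_nonneg hnn).1 hL e (Finset.mem_univ e)
    rcases mul_eq_zero.1 this with h | h
    · exact h
    · exact absurd h (ne_of_gt (htpos e))
  have coneRep : ∀ y ∈ P, ∃ c : κ → ℝ, (∀ e, 0 ≤ c e) ∧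
      y - w = ∑ e, c e • (xg e - w) := by
    intro y hy
    by_cases hLy : L (y - w) = 0
    · refine ⟨0, fun e => le_refl 0, ?_⟩
      rw [hface y hy hLy]
      simp
    · have hLypos : 0 < L (y - w) := lt_of_le_of_ne (hL0 y hy) (Ne.symm hLy)
      have hyQ := repB y hy hLypos
      rw [← hQE] at hyQ
      have hyQ' : w + (L (y - w))⁻¹ • (y - w)
          ∈ convexHull ℝ ((hEQfin.toFinset : Finset E) : Set E) := by
        rwa [Set.Finite.coe_toFinset]
      obtain ⟨μ, hμ0, hμ1, hμsum⟩ := mem_convexHull_finset' hyQ'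
      refine ⟨fun e => L (y - w) * μ (e : E) / t e, ?_, ?_⟩
      · intro e
        exact div_nonneg (mul_nonneg (le_of_lt hLypos) (hμ0 _ e.2)) (le_of_lt (htpos e))
      · have hterm : ∀ e : κ, (L (y - w) * μ (e : E) / t e) • (xg e - w)
            = (L (y - w) * μ (e : E)) • ((e : E) - w) := by
          intro e
          rw [hxw e, smul_smul, div_mul_cancel₀ _ (ne_of_gt (htpos e))]
        rw [Finset.sum_congr rfl (fun e _ => hterm e)]
        have h1 : ∑ e : κ, (L (y - w) * μ (e : E)) • ((e : E) - w)
            = L (y - w) • ∑ a ∈ hEQfin.toFinset, μ a • (a - w) := by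
          rw [Finset.smul_sum,
            ← Finset.sum_coe_sort hEQfin.toFinset (fun a => L (y - w) • (μ a • (a - w)))]
          exact Finset.sum_congr rfl fun e _ => by rw [smul_smul]
        rw [h1]
        have h2 : ∑ a ∈ hEQfin.toFinset, μ a • (a - w) = (L (y - w))⁻¹ • (y - w) := by
          have h3 : ∑ a ∈ hEQfin.toFinset, μ a • (a - w)
              = (∑ a ∈ hEQfin.toFinset, μ a • a) - (∑ a ∈ hEQfin.toFinset, μ a) • w := by
            rw [Finset.sum_smul, ← Finset.sum_sub_distrib]
            exact Finset.sum_congr rfl fun a _ => smul_sub _ _ _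
          rw [h3, hμsum, hμ1, one_smul, add_sub_cancel_left]
        rw [h2, smul_smul, mul_inv_cancel₀ (ne_of_gt hLypos), one_smul]
  refine ⟨κ, inferInstance, xg, ?_, pointed, coneRep⟩
  intro e
  refine ⟨?_, hep' e, hseg' e⟩
  intro hwe
  have h0 : L (xg e - w) = 0 := by rw [← hwe]; simp
  rw [hLg e] at h0
  exact absurd h0 (ne_of_gt (htpos e))
end AuxLemmas

/-- `v` is a vertex (extreme point) of `P`. -/
def IsVertex {n : ℕ} (P : Set (Fin n → ℝ)) (v : Fin n → ℝ) : Prop :=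
  v ∈ Set.extremePoints ℝ P

/-- `v` and `w` are distinct vertices of `P` connected by an edge, i.e. the segment
joining them is a one-dimensional extreme (face) subset of `P`. -/
def IsEdge {n : ℕ} (P : Set (Fin n → ℝ)) (v w : Fin n → ℝ) : Prop :=
  v ≠ w ∧ IsVertex P v ∧ IsVertex P w ∧ IsExtreme ℝ P (segment ℝ v w)

/-- Let `P` be an `n`-dimensional polytope, `v` a vertex, and
`v₁,...,vₙ` distinct vertices each joined to `v` by an edge.  For any
`u ∈ conv(v, v₁,...,vₙ)` and any vertex `w` of `P` not among `{v, v₁,...,vₙ}`,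
there are distinct vertices `w₁,...,wₘ` of `P`, each joined to `w` by an edge, with
`u ∈ w + Cone(w₁ − w,...,wₘ − w)`, this cone simplicial, and
`u ∉ conv(w, w₁,...,wₘ) ∖ conv(w₁,...,wₘ)`. -/
theorem lemma_non_adjacent {n : ℕ} (V : Finset (Fin n → ℝ))
    (P : Set (Fin n → ℝ)) (hP : P = convexHull ℝ (V : Set (Fin n → ℝ)))
    (hfull : affineSpan ℝ P = ⊤)
    (v : Fin n → ℝ) (hv : IsVertex P v)
    (vs : Fin n → (Fin n → ℝ)) (hvs : Function.Injective vs)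
    (hvsv : ∀ i, vs i ≠ v) (hedge : ∀ i, IsEdge P v (vs i))
    (u : Fin n → ℝ) (hu : u ∈ convexHull ℝ (insert v (Set.range vs)))
    (w : Fin n → ℝ) (hw : IsVertex P w) (hwv : w ≠ v) (hwvs : ∀ i, w ≠ vs i) :
    ∃ (m : ℕ) (ws : Fin m → (Fin n → ℝ)),
      Function.Injective ws ∧
      (∀ i, IsEdge P w (ws i)) ∧
      (∃ c : Fin m → ℝ, (∀ i, 0 ≤ c i) ∧ u = w + ∑ i, c i • (ws i - w)) ∧
      LinearIndependent ℝ (fun i => ws i - w) ∧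
      u ∉ convexHull ℝ (insert w (Set.range ws)) \ convexHull ℝ (Set.range ws) := by
  classical
  subst hP
  obtain ⟨κ, instκ, xg, hedges, pointed, coneRep⟩ := vertex_cone V w hw
  have hwP : w ∈ convexHull ℝ (V : Set (Fin n → ℝ)) := hw.1
  have hxgP : ∀ e, xg e ∈ convexHull ℝ (V : Set (Fin n → ℝ)) :=
    fun e => ((hedges e).2.1).1
  -- every extreme point other than `w` has a cone representation of weight at least 1
  have wt : ∀ x : Fin n → ℝ,
      x ∈ Set.extremePoints ℝ (convexHull ℝ (V : Set (Fin n → ℝ))) → x ≠ w →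
      ∃ c : κ → ℝ, (∀ i, 0 ≤ c i) ∧ x - w = ∑ i, c i • (xg i - w) ∧ 1 ≤ ∑ i, c i := by
    intro x hx hxw
    obtain ⟨c, hc0, hcrep⟩ := coneRep x hx.1
    by_cases h1 : 1 ≤ ∑ i, c i
    · exact ⟨c, hc0, hcrep, h1⟩
    · push_neg at h1
      have hsmul : ∑ i, c i • (xg i - w) = (∑ i, c i • xg i) - (∑ i, c i) • w := by
        rw [Finset.sum_smul, ← Finset.sum_sub_distrib]
        exact Finset.sum_congr rfl fun i _ => smul_sub _ _ _
      have hxhull : x ∈ convexHull ℝ (insert w (Set.range xg)) := by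
        apply mem_convexHull_of_exists_fintype (ι := Option κ)
          (fun o => match o with | none => 1 - ∑ i, c i | some i => c i)
          (fun o => match o with | none => w | some i => xg i)
        · rintro (_ | i)
          · simp only []
            linarith
          · exact hc0 i
        · rw [Fintype.sum_option]
          simp
        · rintro (_ | i)
          · exact Set.mem_insert _ _
          · exact Set.mem_insert_of_mem _ ⟨i, rfl⟩
        · rw [Fintype.sum_option]
          simp only []
          have hx' : x = w + ((∑ i, c i • xg i) - (∑ i, c i) • w) := by
            rw [← hsmul, ← hcrep]
            simp
          rw [hx', sub_smul, one_smul]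
          abel
      have hsub : convexHull ℝ (insert w (Set.range xg))
          ⊆ convexHull ℝ (V : Set (Fin n → ℝ)) := by
        apply convexHull_min _ (convex_convexHull ℝ _)
        rw [Set.insert_subset_iff]
        exact ⟨hwP, Set.range_subset_iff.2 hxgP⟩
      have hxe := extremePoints_convexHull_subset (extremePoint_of_subset hsub hx hxhull)
      rw [Set.mem_insert_iff] at hxe
      rcases hxe with h | h
      · exact absurd h hxw
      · obtain ⟨i₀, hxi⟩ := h
        subst hxi
        refine ⟨fun i => if i = i₀ then 1 else 0, fun i => by by_cases h : i = i₀ <;> simp [h], ?_, ?_⟩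
        · have : ∑ i, (if i = i₀ then (1:ℝ) else 0) • (xg i - w) = xg i₀ - w := by
            simp [ite_smul]
          exact this.symm
        · have : ∑ i, (if i = i₀ then (1:ℝ) else 0) = 1 := by simp
          rw [this]
  -- decompose u over the given vertices
  obtain ⟨ι, hι, lam, z, hlam0, hlam1, hz, hzsum⟩ := mem_convexHull_iff_exists_fintype.1 hu
  have hzep : ∀ i, z i ∈ Set.extremePoints ℝ (convexHull ℝ (V : Set (Fin n → ℝ)))
      ∧ z i ≠ w := by
    intro i
    rcases Set.mem_insert_iff.1 (hz i) with h | h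
    · rw [h]
      exact ⟨hv, fun h' => hwv h'.symm⟩
    · obtain ⟨j, hj⟩ := h
      rw [← hj]
      exact ⟨(hedge j).2.2.1, fun h' => hwvs j h'.symm⟩
  choose cz hcz0 hczrep hcz1 using fun i => wt (z i) (hzep i).1 (hzep i).2
  set C : κ → ℝ := fun e => ∑ i, lam i * cz i e with hCdef
  have hC0 : ∀ e, 0 ≤ C e :=
    fun e => Finset.sum_nonneg fun i _ => mul_nonneg (hlam0 i) (hcz0 i e)
  have hCrep : u - w = ∑ e, C e • (xg e - w) := by
    have h1 : u - w = ∑ i, lam i • (z i - w) := by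
      have : ∑ i, lam i • (z i - w) = (∑ i, lam i • z i) - (∑ i, lam i) • w := by
        rw [Finset.sum_smul, ← Finset.sum_sub_distrib]
        exact Finset.sum_congr rfl fun i _ => smul_sub _ _ _
      rw [this, hzsum, hlam1, one_smul]
    rw [h1]
    have h2 : ∀ i, lam i • (z i - w) = ∑ e, (lam i * cz i e) • (xg e - w) := by
      intro i
      rw [hczrep i, Finset.smul_sum]
      exact Finset.sum_congr rfl fun e _ => smul_smul _ _ _
    rw [Finset.sum_congr rfl fun i _ => h2 i, Finset.sum_comm]
    exact Finset.sum_congr rfl fun e _ => by rw [← Finset.sum_smul]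
  have h3 : ∑ e, C e = ∑ i, lam i * ∑ e, cz i e := by
    simp only [hCdef]
    rw [Finset.sum_comm]
    exact Finset.sum_congr rfl fun i _ => (Finset.mul_sum _ _ _).symm
  have hC1 : 1 ≤ ∑ e, C e := by
    rw [h3]
    calc (1:ℝ) = ∑ i, lam i := hlam1.symm
      _ ≤ ∑ i, lam i * ∑ e, cz i e :=
          Finset.sum_le_sum fun i _ => le_mul_of_one_le_right (hlam0 i) (hcz1 i)
  -- Caratheodory-type reduction keeping weight ≥ 1
  obtain ⟨s, c', hc'0, hc'supp, hc'rep, hc'1, hli⟩ :=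
    cone_reduce (fun e => xg e - w) pointed (u - w) C hC0 hCrep hC1
  set eqv : Fin s.card ≃ {i // i ∈ s} := s.equivFin.symm with heqvdef
  set ws : Fin s.card → (Fin n → ℝ) := fun j => xg (eqv j : κ) with hwsdef
  set cc : Fin s.card → ℝ := fun j => c' (eqv j : κ) with hccdef
  have hristr_vec : ∑ i, c' i • (xg i - w) = ∑ i ∈ s, c' i • (xg i - w) :=
    (Finset.sum_subset (Finset.subset_univ s)
      (fun i _ hi => by rw [hc'supp i hi, zero_smul])).symm
  have hristr_c : ∑ i, c' i = ∑ i ∈ s, c' i :=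
    (Finset.sum_subset (Finset.subset_univ s) (fun i _ hi => hc'supp i hi)).symm
  have hsum_vec : ∑ j, cc j • (ws j - w) = ∑ i, c' i • (xg i - w) := by
    rw [hristr_vec, ← Finset.sum_coe_sort s (fun i => c' i • (xg i - w)),
      ← Equiv.sum_comp eqv (fun i : {i // i ∈ s} => c' (i : κ) • (xg (i : κ) - w))]
  have hsum_c : ∑ j, cc j = ∑ i, c' i := by
    rw [hristr_c, ← Finset.sum_coe_sort s (fun i => c' i),
      ← Equiv.sum_comp eqv (fun i : {i // i ∈ s} => c' (i : κ))]
  have hcc1 : 1 ≤ ∑ j, cc j := by rw [hsum_c]; exact hc'1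
  have hm : 0 < s.card := by
    rcases Nat.eq_zero_or_pos s.card with h0 | h
    · exfalso
      have hs0 : s = ∅ := Finset.card_eq_zero.1 h0
      have hzero : ∑ i, c' i = 0 := by
        rw [hristr_c, hs0, Finset.sum_empty]
      linarith
    · exact h
  have hinj : Function.Injective ws := by
    intro a b hab
    have h1 : (fun i : {i // i ∈ s} => xg (i : κ) - w) (eqv a)
        = (fun i : {i // i ∈ s} => xg (i : κ) - w) (eqv b) := by
      simpa [hwsdef] using congrArg (fun q => q - w) hab
    exact eqv.injective (hli.injective h1)
  have hli' : LinearIndependent ℝ (fun j => ws j - w) := hli.comp eqv eqv.injective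
  have hcrep' : u = w + ∑ j, cc j • (ws j - w) := by
    rw [hsum_vec, ← hc'rep]
    simp
  refine ⟨s.card, ws, hinj, ?_, ⟨cc, fun j => hc'0 _, hcrep'⟩, hli', ?_⟩
  · intro j
    exact ⟨(hedges (eqv j : κ)).1, hw, (hedges (eqv j : κ)).2.1, (hedges (eqv j : κ)).2.2⟩
  · -- the point is not in the half-open simplex
    rintro ⟨hm1, hm2⟩
    have hne : (Set.range ws).Nonempty := ⟨ws ⟨0, hm⟩, Set.mem_range_self _⟩
    rw [convexHull_insert hne, mem_convexJoin] at hm1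
    obtain ⟨a, ha, q, hq, hseg⟩ := hm1
    rw [Set.mem_singleton_iff] at ha
    rw [ha] at hseg
    obtain ⟨ι2, hι2, lam2, z2, h20, h21, h2z, h2sum⟩ := mem_convexHull_iff_exists_fintype.1 hq
    choose jdx hjdx using fun i => (h2z i : z2 i ∈ Set.range ws)
    set b : Fin s.card → ℝ := fun k => ∑ i ∈ Finset.univ.filter (fun i => jdx i = k), lam2 i
      with hbdef
    have hb0 : ∀ k, 0 ≤ b k :=
      fun k => Finset.sum_nonneg fun i _ => h20 i
    have hbsum : ∑ k, b k = 1 := by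
      rw [hbdef, ← h21]
      exact Finset.sum_fiberwise_of_maps_to (fun i _ => Finset.mem_univ (jdx i)) lam2
    have hqw : q - w = ∑ k, b k • (ws k - w) := by
      have h1 : q - w = ∑ i, lam2 i • (z2 i - w) := by
        have h2 : ∑ i, lam2 i • (z2 i - w) = (∑ i, lam2 i • z2 i) - (∑ i, lam2 i) • w := by
          rw [Finset.sum_smul, ← Finset.sum_sub_distrib]
          exact Finset.sum_congr rfl fun i _ => smul_sub _ _ _
        rw [h2, h2sum, h21, one_smul]
      have h3 : ∑ k, b k • (ws k - w) = ∑ i, lam2 i • (ws (jdx i) - w) := by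
        rw [← Finset.sum_fiberwise_of_maps_to
          (fun i (_ : i ∈ Finset.univ) => Finset.mem_univ (jdx i))
          (fun i => lam2 i • (ws (jdx i) - w))]
        apply Finset.sum_congr rfl
        intro k _
        rw [hbdef, Finset.sum_smul]
        apply Finset.sum_congr rfl
        intro i hi
        rw [(Finset.mem_filter.1 hi).2]
      rw [h1, h3]
      exact Finset.sum_congr rfl fun i _ => by rw [hjdx i]
    obtain ⟨α, β, hα0, hβ0, hαβ, hu_eq⟩ := hseg
    have huw : u - w = ∑ k, (β * b k) • (ws k - w) := by
      have h4 : u - w = β • (q - w) := by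
        rw [← hu_eq]
        calc α • w + β • q - w = β • (q - w) + (α + β - 1) • w := by module
          _ = β • (q - w) := by rw [hαβ]; simp
      rw [h4, hqw, Finset.smul_sum]
      exact Finset.sum_congr rfl fun k _ => smul_smul _ _ _
    have hdiff : ∑ k, (cc k - β * b k) • (ws k - w) = 0 := by
      have : ∑ k, (cc k - β * b k) • (ws k - w)
          = ∑ k, cc k • (ws k - w) - ∑ k, (β * b k) • (ws k - w) := by
        rw [← Finset.sum_sub_distrib]
        exact Finset.sum_congr rfl fun k _ => sub_smul _ _ _
      rw [this, ← huw]
      have h5 : u - w = ∑ k, cc k • (ws k - w) := by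
        rw [hcrep']
        simp
      rw [← h5, sub_self]
    have hccb : ∀ k, cc k = β * b k := by
      intro k
      have := Fintype.linearIndependent_iff.1 hli' (fun k => cc k - β * b k) hdiff k
      linarith
    have hβ1 : β = 1 := by
      have h6 : ∑ k, cc k = β := by
        rw [Finset.sum_congr rfl fun k _ => hccb k, ← Finset.mul_sum, hbsum, mul_one]
      have h7 : β ≤ 1 := by linarith
      linarith [hcc1, h6]
    have huq : u = q := by
      rw [← hu_eq, hβ1, show α = 0 by linarith]
      simp
    exact hm2 (huq ▸ hq)
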